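/- Let N ≥ 2 be even and set θ_1 = 4π/(N+1) and θ_l = 2π/(N+1) for l = 2,…,N. Then a bit string m ∈ {0,1}^N satisfies sin((Σ_{l=1}^N (−1)^{m_l} θ_l)/2) = 0 if and only if m is the all-zeros string or the all-ones string. In particular, exactly one such m has m_1 = 0. -/

import Mathlib

open Finset

theorem stmt13 (N : ℕ) (hN : 2 ≤ N) (heven : Even N) (θ : Fin N → ℝ)
    (hθ1 : θ ⟨0, by omega⟩ = 4 * Real.pi / (N + 1))
    (hθ : ∀ l : Fin N, l ≠ ⟨0, by omega⟩ → θ l = 2 * Real.pi / (N + 1)) :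
    (∀ m : Fin N → Fin 2,
        (Real.sin ((∑ l, (-1 : ℝ) ^ (m l : ℕ) * θ l) / 2) = 0 ↔
          (∀ l, m l = 0) ∨ (∀ l, m l = 1))) ∧
    (∃! m : Fin N → Fin 2, m ⟨0, by omega⟩ = 0 ∧
        Real.sin ((∑ l, (-1 : ℝ) ^ (m l : ℕ) * θ l) / 2) = 0) := by
  have hfin2 : ∀ x : Fin 2, x = 0 ∨ x = 1 := by decide
  set i0 : Fin N := ⟨0, by omega⟩ with hi0
  have hN1 : ((N : ℝ) + 1) ≠ 0 := by positivity
  set c : Fin N → ℤ := fun l => if l = i0 then 2 else 1 with hc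
  have hcpos : ∀ l, 0 < c l := by
    intro l; simp only [hc]; split <;> norm_num
  have hcsum : ∑ l, c l = (N : ℤ) + 1 := by
    have hce : ∀ l : Fin N, c l = 1 + (if l = i0 then 1 else 0) := by
      intro l; simp only [hc]; split <;> norm_num
    rw [Finset.sum_congr rfl fun l _ => hce l, Finset.sum_add_distrib,
      Finset.sum_const, Finset.sum_ite_eq' Finset.univ i0 (fun _ => (1:ℤ))]
    simp
  have hθc : ∀ l, θ l = (c l : ℝ) * (2 * Real.pi / (N + 1)) := by
    intro l
    by_cases h : l = i0
    · subst h; rw [hθ1]; simp only [hc, if_pos rfl]; push_cast; ring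
    · rw [hθ l h]; simp only [hc, if_neg h]; push_cast; ring
  have key : ∀ m : Fin N → Fin 2,
      (∑ l, (-1 : ℝ) ^ (m l : ℕ) * θ l) / 2
        = ((∑ l, (-1 : ℤ) ^ (m l : ℕ) * c l : ℤ) : ℝ) * Real.pi / (N + 1) := by
    intro m
    have : ∑ l, (-1 : ℝ) ^ (m l : ℕ) * θ l
        = (∑ l, ((((-1 : ℤ) ^ (m l : ℕ) * c l : ℤ)) : ℝ)) * (2 * Real.pi / (N + 1)) := by
      rw [Finset.sum_mul]
      refine Finset.sum_congr rfl fun l _ => ?_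
      rw [hθc l]; push_cast; ring
    rw [this]; push_cast; field_simp
  -- the main characterization
  have main : ∀ m : Fin N → Fin 2,
      (Real.sin ((∑ l, (-1 : ℝ) ^ (m l : ℕ) * θ l) / 2) = 0 ↔
        (∀ l, m l = 0) ∨ (∀ l, m l = 1)) := by
    intro m
    rw [key m]
    set T : ℤ := ∑ l, (-1 : ℤ) ^ (m l : ℕ) * c l with hT
    constructor
    · intro hsin
      rw [Real.sin_eq_zero_iff] at hsin
      obtain ⟨n, hn⟩ := hsin
      have hdvd : ((N : ℤ) + 1) ∣ T := by
        have h1 : ((n * ((N : ℤ) + 1) : ℤ) : ℝ) * Real.pi = (T : ℝ) * Real.pi := by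
          push_cast
          rw [mul_comm (n:ℝ), mul_assoc, hn]
          field_simp
        have h2 : n * ((N : ℤ) + 1) = T := by
          exact_mod_cast mul_right_cancel₀ Real.pi_ne_zero h1
        exact ⟨n, by linarith⟩
      -- parity: T is odd
      have hpar : ¬ (2 : ℤ) ∣ T := by
        intro h2
        have h0 : ((T : ZMod 2)) = 0 :=
          (ZMod.intCast_zmod_eq_zero_iff_dvd T 2).mpr (by exact_mod_cast h2)
        have h1 : ((T : ZMod 2)) = ((N : ZMod 2) + 1) := by
          push_cast [hT]
          rw [show ((-1 : ZMod 2)) = 1 by decide]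
          simp only [one_pow, one_mul]
          rw [show (∑ l, ((c l : ZMod 2))) = ((∑ l, c l : ℤ) : ZMod 2) by push_cast; ring]
          rw [hcsum]; push_cast; ring
        have hNz : (N : ZMod 2) = 0 :=
          (ZMod.natCast_eq_zero_iff N 2).mpr heven.two_dvd
        rw [h1, hNz] at h0
        exact absurd h0 (by decide)
      have hT0 : T ≠ 0 := fun h => hpar (h ▸ dvd_zero 2)
      have hbound : |T| ≤ (N : ℤ) + 1 := by
        calc |T| ≤ ∑ l, |(-1 : ℤ) ^ (m l : ℕ) * c l| := Finset.abs_sum_le_sum_abs _ _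
        _ = ∑ l, c l := by
            refine Finset.sum_congr rfl fun l _ => ?_
            rw [abs_mul, abs_pow, abs_neg, abs_one, one_pow, one_mul,
              abs_of_pos (hcpos l)]
        _ = (N : ℤ) + 1 := hcsum
      have hge : (N : ℤ) + 1 ≤ |T| :=
        Int.le_of_dvd (abs_pos.mpr hT0) ((dvd_abs _ _).mpr hdvd)
      have habs : T = (N : ℤ) + 1 ∨ T = -((N : ℤ) + 1) := by
        rcases abs_cases T with ⟨h1, _⟩ | ⟨h1, _⟩ <;> omega
      rcases habs with h | h
      · left
        have heq : ∑ l, (-1 : ℤ) ^ (m l : ℕ) * c l = ∑ l, c l := by rw [← hT, h, hcsum]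
        have hle : ∀ l ∈ Finset.univ, (-1 : ℤ) ^ (m l : ℕ) * c l ≤ c l := by
          intro l _
          rcases hfin2 (m l) with h0 | h1
          · simp [h0]
          · simp only [h1]
            norm_num
            linarith [hcpos l]
        have := (Finset.sum_eq_sum_iff_of_le hle).mp heq
        intro l
        rcases hfin2 (m l) with h0 | h1
        · exact h0
        · exfalso
          have := this l (Finset.mem_univ l)
          rw [h1] at this
          norm_num at this
          linarith [hcpos l]
      · right
        have heq : ∑ l, (-1 : ℤ) ^ (m l : ℕ) * c l = ∑ l, -c l := by
          rw [← hT, h, Finset.sum_neg_distrib, hcsum]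
        have hle : ∀ l ∈ Finset.univ, -c l ≤ (-1 : ℤ) ^ (m l : ℕ) * c l := by
          intro l _
          rcases hfin2 (m l) with h0 | h1
          · simp only [h0]
            norm_num
            linarith [hcpos l]
          · simp [h1]
        have := (Finset.sum_eq_sum_iff_of_le hle).mp heq.symm
        intro l
        rcases hfin2 (m l) with h0 | h1
        · exfalso
          have := this l (Finset.mem_univ l)
          rw [h0] at this
          norm_num at this
          linarith [hcpos l]
        · exact h1
    · intro h
      rcases h with h | h
      · have : T = (N : ℤ) + 1 := by
          rw [hT, ← hcsum]
          exact Finset.sum_congr rfl fun l _ => by rw [h l]; norm_num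
        rw [this]
        push_cast
        rw [show ((N : ℝ) + 1) * Real.pi / ((N : ℝ) + 1) = Real.pi by field_simp]
        exact Real.sin_pi
      · have : T = -((N : ℤ) + 1) := by
          rw [hT, ← hcsum, ← Finset.sum_neg_distrib]
          exact Finset.sum_congr rfl fun l _ => by rw [h l]; norm_num
        rw [this]
        push_cast
        rw [show (-((N : ℝ) + 1)) * Real.pi / ((N : ℝ) + 1) = -Real.pi by field_simp]
        simp
  refine ⟨main, ?_⟩
  refine ⟨fun _ => 0, ⟨rfl, ?_⟩, ?_⟩
  · exact (main _).mpr (Or.inl fun _ => rfl)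
  · rintro y ⟨hy0, hysin⟩
    rcases (main y).mp hysin with h | h
    · funext l; exact h l
    · exfalso
      have := h i0
      rw [hy0] at this
      exact absurd this (by decide)
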